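/- Let ζE and Z_EMS be as in the context, and let D(t) := ∑_{k ≥ 0} ζE(-k) (-t)^k / k! denote the depth-one generating function. For every r ≥ 1, Z_EMS(t_1,…,t_r) = ∏_{n=1}^r D(t_n + t_{n+1} + ⋯ + t_r) in ℂ⟦t_1,…,t_r⟧; equivalently, Z_EMS(t_1,…,t_r) = Z_EMS(t_r) · Z_EMS(t_{r-1} + t_r) ⋯ Z_EMS(t_1 + ⋯ + t_r), where each factor Z_EMS in one variable is evaluated at the indicated sum of variables. -/

import Mathlib

open scoped BigOperators

/-- The generating series `Z_EMS(t₁,…,t_r) = ∑_k ζE(-k₁,…,-k_r) ∏ᵢ (-tᵢ)^{kᵢ}/kᵢ!`. -/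
noncomputable def ZEMS (zE : List ℕ → ℂ) (r : ℕ) : MvPowerSeries (Fin r) ℂ :=
  fun d => zE (List.ofFn fun i : Fin r => d i) *
    ∏ i : Fin r, ((-1 : ℂ) ^ (d i) * ((d i).factorial : ℂ)⁻¹)

/-- The depth-one generating function `D(u) = ∑_{k≥0} ζE(-k) (-u)^k/k!`, evaluated at a
multivariate power series `u` with zero constant term; its coefficient at a monomial `d` is
the (finite) sum `∑_k ζE(-k) · coeff d ((-u)^k/k!)`. -/
noncomputable def Done (zE : List ℕ → ℂ) {n : ℕ} (u : MvPowerSeries (Fin n) ℂ) :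
    MvPowerSeries (Fin n) ℂ :=
  fun d => ∑ k ∈ Finset.range ((∑ i, d i) + 1),
    zE [k] * MvPowerSeries.coeff d (((k.factorial : ℂ))⁻¹ • (-u) ^ k)

open MvPowerSeries Finset

section Aux

lemma coeff_sum_X_pow {N : ℕ} (s : Finset (Fin N)) (k : ℕ) (d : Fin N →₀ ℕ) :
    MvPowerSeries.coeff d ((∑ m ∈ s, (MvPowerSeries.X m : MvPowerSeries (Fin N) ℂ)) ^ k) =
      if (∀ i, d i ≠ 0 → i ∈ s) ∧ (∑ i, d i = k) then (Nat.multinomial s d : ℂ) else 0 := by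
  classical
  have h1 : (∑ m ∈ s, (MvPowerSeries.X m : MvPowerSeries (Fin N) ℂ)) ^ k
      = ((((∑ m ∈ s, MvPolynomial.X m) ^ k : MvPolynomial (Fin N) ℂ)) : MvPowerSeries (Fin N) ℂ) := by
    rw [MvPolynomial.coe_pow, ← MvPolynomial.coeToMvPowerSeries.ringHom_apply, map_sum]
    simp
  rw [h1, MvPolynomial.coeff_coe, Finset.sum_pow_eq_sum_piAntidiag, MvPolynomial.coeff_sum]
  have h2 : ∀ g ∈ piAntidiag s k,
      MvPolynomial.coeff d ((Nat.multinomial s g : MvPolynomial (Fin N) ℂ) * ∏ i ∈ s, MvPolynomial.X i ^ g i)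
      = if g = ⇑d then (Nat.multinomial s g : ℂ) else 0 := by
    intro g hg
    rw [mem_piAntidiag] at hg
    set G : Fin N →₀ ℕ := Finsupp.equivFunOnFinite.symm g with hG
    have hgG : ∀ i, g i = G i := fun i => rfl
    have h3 : (∏ i ∈ s, MvPolynomial.X i ^ g i : MvPolynomial (Fin N) ℂ)
        = ∏ i ∈ G.support, MvPolynomial.X i ^ G i := by
      refine (Finset.prod_subset ?_ ?_).symm
      · intro i hi
        exact hg.2 i (by simpa [hgG] using Finsupp.mem_support_iff.mp hi)
      · intro i _ hi
        rw [hgG, Finsupp.notMem_support_iff.mp hi, pow_zero]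
    rw [h3, MvPolynomial.prod_X_pow_eq_monomial, ← map_natCast (MvPolynomial.C (σ := Fin N)),
      MvPolynomial.coeff_C_mul, MvPolynomial.coeff_monomial]
    have h4 : (G = d) ↔ (g = ⇑d) := by
      rw [hG, Equiv.symm_apply_eq]
      exact Iff.rfl
    rw [mul_ite, mul_one, mul_zero]
    exact if_congr h4 rfl rfl
  rw [Finset.sum_congr rfl h2]
  have h5 : ∀ g ∈ piAntidiag s k, (if g = ⇑d then (Nat.multinomial s g : ℂ) else 0)
      = if g = ⇑d then (Nat.multinomial s ⇑d : ℂ) else 0 := by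
    intro g _; split <;> simp_all
  rw [Finset.sum_congr rfl h5, Finset.sum_ite_eq' (piAntidiag s k) (⇑d) (fun _ => (Nat.multinomial s ⇑d : ℂ))]
  have hiff : (⇑d ∈ piAntidiag s k) ↔ ((∀ i, d i ≠ 0 → i ∈ s) ∧ (∑ i, d i = k)) := by
    rw [mem_piAntidiag]
    constructor
    · rintro ⟨hsum, hsupp⟩
      refine ⟨hsupp, ?_⟩
      rw [← hsum]
      exact (Finset.sum_subset (subset_univ s) (fun i _ hi => by
        by_contra h; exact hi (hsupp i h))).symm
    · rintro ⟨hsupp, hsum⟩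
      refine ⟨?_, hsupp⟩
      rw [← hsum]
      exact Finset.sum_subset (subset_univ s) (fun i _ hi => by
        by_contra h; exact hi (hsupp i h))
  simp only [hiff]

lemma multinomial_cast_eq {N : ℕ} (s : Finset (Fin N)) (d : Fin N →₀ ℕ)
    (hs : ∀ i, d i ≠ 0 → i ∈ s) :
    (Nat.multinomial s d : ℂ) * (((∑ i, d i).factorial : ℂ))⁻¹
      = ∏ i, (((d i).factorial : ℂ))⁻¹ := by
  have hsum : ∑ i ∈ s, d i = ∑ i, d i :=
    Finset.sum_subset (subset_univ s) (fun i _ hi => by by_contra h; exact hi (hs i h))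
  have hprod : ∏ i ∈ s, ((d i).factorial : ℂ) = ∏ i, ((d i).factorial : ℂ) :=
    Finset.prod_subset (subset_univ s) (fun i _ hi => by
      have : d i = 0 := by by_contra h2; exact hi (hs i h2)
      simp [this])
  have spec := Nat.multinomial_spec s ⇑d
  have specC : (∏ i ∈ s, ((d i).factorial : ℂ)) * (Nat.multinomial s ⇑d : ℂ)
      = (((∑ i, d i).factorial : ℂ)) := by
    rw [← hsum]
    push_cast [← spec]
    ring
  rw [hprod] at specC
  have h1 : (((∑ i, d i).factorial : ℂ)) ≠ 0 := Nat.cast_ne_zero.mpr (Nat.factorial_ne_zero _)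
  have h2 : ∀ i ∈ (univ : Finset (Fin N)), (((d i).factorial : ℂ)) ≠ 0 :=
    fun i _ => Nat.cast_ne_zero.mpr (Nat.factorial_ne_zero _)
  have hP : (∏ i, ((d i).factorial : ℂ)) ≠ 0 := Finset.prod_ne_zero_iff.mpr h2
  rw [show (∏ i, (((d i).factorial : ℂ))⁻¹) = (∏ i, ((d i).factorial : ℂ))⁻¹ from
    Finset.prod_inv_distrib _]
  field_simp
  linear_combination specC

lemma coeff_Done (zE : List ℕ → ℂ) {N : ℕ} (s : Finset (Fin N)) (d : Fin N →₀ ℕ) :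
    MvPowerSeries.coeff d (Done zE (∑ m ∈ s, MvPowerSeries.X m)) =
      if (∀ i, d i ≠ 0 → i ∈ s) then
        zE [∑ i, d i] * (-1 : ℂ)^(∑ i, d i) * ∏ i, (((d i).factorial : ℂ))⁻¹ else 0 := by
  have hu : ∀ k : ℕ, MvPowerSeries.coeff d
      ((((k.factorial : ℂ))⁻¹ • (-(∑ m ∈ s, (MvPowerSeries.X m : MvPowerSeries (Fin N) ℂ))) ^ k))
      = ((k.factorial : ℂ))⁻¹ * (-1:ℂ)^k *
        (if (∀ i, d i ≠ 0 → i ∈ s) ∧ (∑ i, d i = k) then (Nat.multinomial s d : ℂ) else 0) := by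
    intro k
    rw [map_smul, smul_eq_mul]
    have : (-(∑ m ∈ s, (MvPowerSeries.X m : MvPowerSeries (Fin N) ℂ))) ^ k
        = (-1:ℂ)^k • (∑ m ∈ s, (MvPowerSeries.X m : MvPowerSeries (Fin N) ℂ))^k := by
      rw [← smul_pow, neg_one_smul]
    rw [this, map_smul, smul_eq_mul, coeff_sum_X_pow]
    ring
  have hDone : MvPowerSeries.coeff d (Done zE (∑ m ∈ s, MvPowerSeries.X m))
      = ∑ k ∈ Finset.range ((∑ i, d i) + 1),
        zE [k] * MvPowerSeries.coeff d (((k.factorial : ℂ))⁻¹ • (-(∑ m ∈ s, MvPowerSeries.X m)) ^ k) := rfl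
  rw [hDone]
  simp only [hu]
  rw [Finset.sum_eq_single_of_mem (∑ i, d i) (Finset.self_mem_range_succ _)]
  · by_cases hsupp : ∀ i, d i ≠ 0 → i ∈ s
    · rw [if_pos (⟨hsupp, rfl⟩ : _ ∧ _), if_pos hsupp, ← multinomial_cast_eq s d hsupp]
      ring
    · simp [hsupp]
  · intro k _ hk
    rw [if_neg (by tauto), mul_zero, mul_zero]

noncomputable def mg {r : ℕ} (d : Fin (r + 2) →₀ ℕ) : Fin (r + 1) →₀ ℕ :=
  Finsupp.equivFunOnFinite.symm fun i =>
    d i.castSucc + if i = Fin.last r then d (Fin.last (r + 1)) else 0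

lemma mg_apply {r : ℕ} (d : Fin (r + 2) →₀ ℕ) (i : Fin (r + 1)) :
    mg d i = d i.castSucc + if i = Fin.last r then d (Fin.last (r + 1)) else 0 := rfl

lemma mg_add {r : ℕ} (d e : Fin (r + 2) →₀ ℕ) : mg (d + e) = mg d + mg e := by
  ext i
  simp only [mg_apply, Finsupp.add_apply]
  split <;> ring

lemma deg_mg {r : ℕ} (d : Fin (r + 2) →₀ ℕ) : ∑ i, mg d i = ∑ j, d j := by
  rw [Fin.sum_univ_castSucc (f := fun i => mg d i), Fin.sum_univ_castSucc (f := fun j => d j),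
    Fin.sum_univ_castSucc (f := fun i => d (Fin.castSucc i))]
  have h1 : ∀ i : Fin r, mg d i.castSucc = d i.castSucc.castSucc := by
    intro i
    rw [mg_apply, if_neg (by simp [Fin.ext_iff, Fin.castSucc, Fin.last]; omega), add_zero]
  have h2 : mg d (Fin.last r) = d (Fin.last r).castSucc + d (Fin.last (r + 1)) := by
    rw [mg_apply, if_pos rfl]
  simp only [h1, h2]
  ring

noncomputable def sp {r : ℕ} (ε : Fin (r + 1) →₀ ℕ) (a : ℕ) : Fin (r + 2) →₀ ℕ :=
  Finsupp.equivFunOnFinite.symm fun j =>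
    Fin.lastCases a (fun i => ε i - if i = Fin.last r then a else 0) j

lemma sp_last {r : ℕ} (ε : Fin (r + 1) →₀ ℕ) (a : ℕ) : sp ε a (Fin.last (r + 1)) = a := by
  show Fin.lastCases (motive := fun _ => ℕ) a (fun i => ε i - if i = Fin.last r then a else 0) (Fin.last (r + 1)) = a
  simp

lemma sp_castSucc {r : ℕ} (ε : Fin (r + 1) →₀ ℕ) (a : ℕ) (i : Fin (r + 1)) :
    sp ε a i.castSucc = ε i - if i = Fin.last r then a else 0 := by
  show Fin.lastCases (motive := fun _ => ℕ) a (fun i => ε i - if i = Fin.last r then a else 0) i.castSucc = _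
  simp

lemma mg_sp {r : ℕ} (ε : Fin (r + 1) →₀ ℕ) (a : ℕ) (ha : a ≤ ε (Fin.last r)) :
    mg (sp ε a) = ε := by
  ext i
  rw [mg_apply, sp_castSucc, sp_last]
  by_cases h : i = Fin.last r
  · simp only [if_pos h]
    subst h
    omega
  · simp only [if_neg h]
    omega

lemma sp_mg {r : ℕ} (e : Fin (r + 2) →₀ ℕ) : sp (mg e) (e (Fin.last (r + 1))) = e := by
  ext j
  refine Fin.lastCases ?_ (fun i => ?_) j
  · rw [sp_last]
  · rw [sp_castSucc, mg_apply]
    split <;> omega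

noncomputable def Mop {r : ℕ} (f : MvPowerSeries (Fin (r + 1)) ℂ) :
    MvPowerSeries (Fin (r + 2)) ℂ :=
  fun d => ((d (Fin.last r).castSucc + d (Fin.last (r + 1))).choose (d (Fin.last (r + 1))) : ℂ)
    * f (mg d)

lemma Mop_apply {r : ℕ} (f : MvPowerSeries (Fin (r + 1)) ℂ) (d : Fin (r + 2) →₀ ℕ) :
    MvPowerSeries.coeff d (Mop f) =
      ((d (Fin.last r).castSucc + d (Fin.last (r + 1))).choose (d (Fin.last (r + 1))) : ℂ)
        * MvPowerSeries.coeff (mg d) f := rfl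

lemma mg_eq_zero_iff {r : ℕ} (d : Fin (r + 2) →₀ ℕ) : mg d = 0 ↔ d = 0 := by
  constructor
  · intro h
    have h' : ∀ i, mg d i = 0 := fun i => by rw [h]; rfl
    ext j
    have goal0 : (0 : Fin (r+2) →₀ ℕ) j = 0 := rfl
    rw [goal0]
    refine Fin.lastCases ?_ (fun i => ?_) j
    · have := h' (Fin.last r)
      rw [mg_apply, if_pos rfl] at this
      omega
    · have := h' (Fin.castPred i.castSucc (by simp [Fin.ext_iff]; omega) : Fin (r+1))
      rw [mg_apply] at this
      have hc : ((Fin.castPred i.castSucc (by simp [Fin.ext_iff]; omega) : Fin (r+1))).castSucc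
          = i.castSucc := by simp [Fin.ext_iff]
      rw [hc] at this
      omega
  · intro h; subst h
    ext i
    simp [mg_apply]

lemma Mop_one {r : ℕ} : Mop (1 : MvPowerSeries (Fin (r + 1)) ℂ) = 1 := by
  ext d
  rw [Mop_apply, MvPowerSeries.coeff_one, MvPowerSeries.coeff_one]
  by_cases h : d = 0
  · subst h
    rw [if_pos rfl, if_pos ((mg_eq_zero_iff 0).mpr rfl)]
    simp
  · rw [if_neg h, if_neg (fun hh => h ((mg_eq_zero_iff d).mp hh)), mul_zero]

/-- summand function for the Vandermonde regrouping -/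
noncomputable def hfun {r : ℕ} (f g : MvPowerSeries (Fin (r + 1)) ℂ)
    (t : ((Fin (r+1) →₀ ℕ) × (Fin (r+1) →₀ ℕ)) × (ℕ × ℕ)) : ℂ :=
  (((t.1.1 (Fin.last r)).choose t.2.1 : ℕ) : ℂ) * MvPowerSeries.coeff t.1.1 f *
    ((((t.1.2 (Fin.last r)).choose t.2.2 : ℕ) : ℂ) * MvPowerSeries.coeff t.1.2 g)

noncomputable def Ψfun {r : ℕ} (q : (Fin (r + 2) →₀ ℕ) × (Fin (r + 2) →₀ ℕ)) :
    ((Fin (r+1) →₀ ℕ) × (Fin (r+1) →₀ ℕ)) × (ℕ × ℕ) :=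
  ((mg q.1, mg q.2), (q.1 (Fin.last (r+1)), q.2 (Fin.last (r+1))))

lemma Mop_mul {r : ℕ} (f g : MvPowerSeries (Fin (r + 1)) ℂ) :
    Mop (f * g) = Mop f * Mop g := by
  classical
  ext d
  rw [Mop_apply, MvPowerSeries.coeff_mul, MvPowerSeries.coeff_mul]
  have key : ∀ q ∈ antidiagonal d,
      MvPowerSeries.coeff q.1 (Mop f) * MvPowerSeries.coeff q.2 (Mop g)
        = hfun f g (Ψfun q) := by
    intro q hq
    rw [Mop_apply, Mop_apply]
    unfold hfun Ψfun
    have h1 : mg q.1 (Fin.last r) = q.1 (Fin.last r).castSucc + q.1 (Fin.last (r+1)) := by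
      rw [mg_apply, if_pos rfl]
    have h2 : mg q.2 (Fin.last r) = q.2 (Fin.last r).castSucc + q.2 (Fin.last (r+1)) := by
      rw [mg_apply, if_pos rfl]
    simp only [h1, h2]
  rw [Finset.sum_congr rfl key]
  have hinj : Set.InjOn Ψfun (antidiagonal d : Set ((Fin (r + 2) →₀ ℕ) × (Fin (r + 2) →₀ ℕ))) := by
    intro q _ q' _ he
    have e1 : mg q.1 = mg q'.1 := congrArg (fun t => t.1.1) he
    have e2 : mg q.2 = mg q'.2 := congrArg (fun t => t.1.2) he
    have b1 : q.1 (Fin.last (r+1)) = q'.1 (Fin.last (r+1)) := congrArg (fun t => t.2.1) he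
    have b2 : q.2 (Fin.last (r+1)) = q'.2 (Fin.last (r+1)) := congrArg (fun t => t.2.2) he
    have k1 : q.1 = q'.1 := by rw [← sp_mg q.1, ← sp_mg q'.1, e1, b1]
    have k2 : q.2 = q'.2 := by rw [← sp_mg q.2, ← sp_mg q'.2, e2, b2]
    exact Prod.ext k1 k2
  rw [← Finset.sum_image hinj]
  have hsub : (antidiagonal d).image Ψfun
      ⊆ antidiagonal (mg d) ×ˢ antidiagonal (d (Fin.last (r+1))) := by
    intro t ht
    rw [Finset.mem_image] at ht
    obtain ⟨q, hq, rfl⟩ := ht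
    rw [Finset.HasAntidiagonal.mem_antidiagonal] at hq
    rw [Finset.mem_product, Finset.HasAntidiagonal.mem_antidiagonal, Finset.HasAntidiagonal.mem_antidiagonal]
    exact ⟨by rw [Ψfun, ← mg_add, hq], by rw [Ψfun, ← Finsupp.add_apply, hq]⟩
  rw [Finset.sum_subset hsub ?vanish]
  case vanish =>
    intro t ht htn
    rw [Finset.mem_product, Finset.HasAntidiagonal.mem_antidiagonal, Finset.HasAntidiagonal.mem_antidiagonal] at ht
    obtain ⟨hε, hab⟩ := ht
    by_cases h1 : t.2.1 ≤ t.1.1 (Fin.last r)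
    · by_cases h2 : t.2.2 ≤ t.1.2 (Fin.last r)
      · exfalso
        apply htn
        rw [Finset.mem_image]
        refine ⟨(sp t.1.1 t.2.1, sp t.1.2 t.2.2), ?_, ?_⟩
        · rw [Finset.HasAntidiagonal.mem_antidiagonal]
          ext j
          refine Fin.lastCases ?_ (fun i => ?_) j
          · rw [Finsupp.add_apply, sp_last, sp_last, hab]
          · rw [Finsupp.add_apply, sp_castSucc, sp_castSucc]
            have hmg : t.1.1 i + t.1.2 i = mg d i := by rw [← hε]; rfl
            rw [mg_apply] at hmg
            by_cases hi : i = Fin.last r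
            · subst hi
              rw [if_pos rfl] at hmg
              rw [if_pos rfl, if_pos rfl]
              omega
            · rw [if_neg hi] at hmg
              rw [if_neg hi, if_neg hi]
              omega
        · unfold Ψfun
          rw [mg_sp _ _ h1, mg_sp _ _ h2, sp_last, sp_last]
      · unfold hfun
        rw [Nat.choose_eq_zero_of_lt (show t.1.2 (Fin.last r) < t.2.2 by omega)]
        simp
    · unfold hfun
      rw [Nat.choose_eq_zero_of_lt (show t.1.1 (Fin.last r) < t.2.1 by omega)]
      simp
  rw [Finset.sum_product, Finset.mul_sum]
  refine Finset.sum_congr rfl fun p hp => ?_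
  rw [Finset.HasAntidiagonal.mem_antidiagonal] at hp
  have hlast : p.1 (Fin.last r) + p.2 (Fin.last r)
      = d (Fin.last r).castSucc + d (Fin.last (r+1)) := by
    have : p.1 (Fin.last r) + p.2 (Fin.last r) = mg d (Fin.last r) := by rw [← hp]; rfl
    rw [this, mg_apply, if_pos rfl]
  have vand : ((d (Fin.last r).castSucc + d (Fin.last (r+1))).choose (d (Fin.last (r+1))) : ℂ) =
      ∑ ab ∈ antidiagonal (d (Fin.last (r+1))),
        ((p.1 (Fin.last r)).choose ab.1 : ℂ) * ((p.2 (Fin.last r)).choose ab.2 : ℂ) := by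
    rw [← hlast, Nat.add_choose_eq]
    push_cast
    rfl
  have step : ∀ ab ∈ antidiagonal (d (Fin.last (r+1))),
      hfun f g ((p.1, p.2), ab)
        = ((p.1 (Fin.last r)).choose ab.1 : ℂ) * ((p.2 (Fin.last r)).choose ab.2 : ℂ)
          * (MvPowerSeries.coeff p.1 f * MvPowerSeries.coeff p.2 g) := by
    intro ab _
    unfold hfun
    ring
  calc ((d (Fin.last r).castSucc + d (Fin.last (r+1))).choose (d (Fin.last (r+1))) : ℂ) *
        (MvPowerSeries.coeff p.1 f * MvPowerSeries.coeff p.2 g)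
      = (∑ ab ∈ antidiagonal (d (Fin.last (r+1))),
          ((p.1 (Fin.last r)).choose ab.1 : ℂ) * ((p.2 (Fin.last r)).choose ab.2 : ℂ))
          * (MvPowerSeries.coeff p.1 f * MvPowerSeries.coeff p.2 g) := by rw [← vand]
    _ = ∑ ab ∈ antidiagonal (d (Fin.last (r+1))), hfun f g ((p.1, p.2), ab) := by
          rw [Finset.sum_mul, Finset.sum_congr rfl (fun ab hab => (step ab hab).symm)]
    _ = ∑ ab ∈ antidiagonal (d (Fin.last (r+1))), hfun f g (p, ab) := rfl

lemma Mop_prod {r : ℕ} {ι : Type*} (s : Finset ι) (f : ι → MvPowerSeries (Fin (r + 1)) ℂ) :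
    Mop (∏ i ∈ s, f i) = ∏ i ∈ s, Mop (f i) := by
  classical
  induction s using Finset.cons_induction with
  | empty => simpa using Mop_one
  | cons a s ha ih => rw [Finset.prod_cons, Finset.prod_cons, Mop_mul, ih]

lemma choose_cast (a b : ℕ) :
    (((a + b).choose b : ℕ) : ℂ) * (((a + b).factorial : ℂ))⁻¹
      = ((a.factorial : ℂ))⁻¹ * ((b.factorial : ℂ))⁻¹ := by
  have h := Nat.choose_mul_factorial_mul_factorial (Nat.le_add_left b a)
  have h2 : (a + b).choose b * b.factorial * a.factorial = (a+b).factorial := by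
    rw [← h]; congr 2; omega
  have hC : (((a + b).choose b : ℕ) : ℂ) * (b.factorial : ℂ) * (a.factorial : ℂ)
      = ((a+b).factorial : ℂ) := by exact_mod_cast congrArg (Nat.cast : ℕ → ℂ) h2
  have ha : (a.factorial : ℂ) ≠ 0 := Nat.cast_ne_zero.mpr (Nat.factorial_ne_zero _)
  have hb : (b.factorial : ℂ) ≠ 0 := Nat.cast_ne_zero.mpr (Nat.factorial_ne_zero _)
  have hab : ((a+b).factorial : ℂ) ≠ 0 := Nat.cast_ne_zero.mpr (Nat.factorial_ne_zero _)
  field_simp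
  linear_combination hC

lemma mg_factorial_prod {r : ℕ} (d : Fin (r + 2) →₀ ℕ) :
    ((d (Fin.last r).castSucc + d (Fin.last (r + 1))).choose (d (Fin.last (r + 1))) : ℂ)
      * ∏ i, (((mg d i).factorial : ℂ))⁻¹
    = ∏ j, (((d j).factorial : ℂ))⁻¹ := by
  rw [Fin.prod_univ_castSucc (f := fun i => (((mg d i).factorial : ℂ))⁻¹),
    Fin.prod_univ_castSucc (f := fun j => (((d j).factorial : ℂ))⁻¹),
    Fin.prod_univ_castSucc (f := fun i => (((d (Fin.castSucc i)).factorial : ℂ))⁻¹)]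
  have h1 : ∀ i : Fin r, mg d i.castSucc = d i.castSucc.castSucc := by
    intro i
    rw [mg_apply, if_neg (by simp [Fin.ext_iff]; omega), add_zero]
  have h2 : mg d (Fin.last r) = d (Fin.last r).castSucc + d (Fin.last (r + 1)) := by
    rw [mg_apply, if_pos rfl]
  simp only [h1, h2]
  rw [mul_comm, mul_assoc, mul_comm ((((d (Fin.last r).castSucc + d (Fin.last (r+1))).factorial : ℂ))⁻¹), choose_cast]
  ring

lemma Mop_Done {r : ℕ} (zE : List ℕ → ℂ) (n : Fin (r + 1)) :
    Mop (Done zE (∑ m ∈ Finset.Ici n, MvPowerSeries.X m))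
      = Done zE (∑ m ∈ Finset.Ici n.castSucc, MvPowerSeries.X m) := by
  ext d
  rw [Mop_apply, coeff_Done, coeff_Done]
  by_cases hs : ∀ j, d j ≠ 0 → j ∈ Finset.Ici n.castSucc
  · have hs' : ∀ i, mg d i ≠ 0 → i ∈ Finset.Ici n := by
      intro i hi
      rw [mg_apply] at hi
      rw [Finset.mem_Ici]
      by_cases hil : i = Fin.last r
      · subst hil; exact Fin.le_last n
      · rw [if_neg hil, add_zero] at hi
        have := hs i.castSucc hi
        rw [Finset.mem_Ici] at this
        exact (Fin.castSucc_le_castSucc_iff).mp this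
    rw [if_pos hs, if_pos hs', deg_mg, ← mul_assoc, mul_comm _ (zE [∑ j, d j] * (-1:ℂ)^(∑ j, d j)),
      mul_assoc, mg_factorial_prod]
  · have hs' : ¬ ∀ i, mg d i ≠ 0 → i ∈ Finset.Ici n := by
      intro hcon
      apply hs
      intro j hj
      rcases Fin.eq_castSucc_or_eq_last j with ⟨i, rfl⟩ | rfl
      · have hmgi : mg d i ≠ 0 := by
          rw [mg_apply]
          intro h0
          exact hj (by omega)
        have := hcon i hmgi
        rw [Finset.mem_Ici] at this ⊢
        exact Fin.castSucc_le_castSucc_iff.mpr this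
      · rw [Finset.mem_Ici]
        exact Fin.le_last _
    rw [if_neg hs, if_neg hs', mul_zero]

lemma coeff_ZEMS (zE : List ℕ → ℂ) (r : ℕ) (d : Fin r →₀ ℕ) :
    MvPowerSeries.coeff d (ZEMS zE r) = zE (List.ofFn fun i : Fin r => d i) *
      ∏ i : Fin r, ((-1 : ℂ) ^ (d i) * ((d i).factorial : ℂ)⁻¹) := rfl

lemma ZEMS_step (zE : List ℕ → ℂ)
    (hErec : ∀ (w : List ℕ) (a b : ℕ),
      zE (w ++ [a, b]) =
        ∑ p ∈ Finset.HasAntidiagonal.antidiagonal b, (b.choose p.1 : ℂ) * zE [p.1] * zE (w ++ [a + p.2]))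
    (r : ℕ) :
    ZEMS zE (r + 2) = Mop (ZEMS zE (r + 1))
      * Done zE (∑ m ∈ Finset.Ici (Fin.last (r+1)), MvPowerSeries.X m) := by
  classical
  ext d
  rw [MvPowerSeries.coeff_mul]
  have hAB : (Fin.last r).castSucc ≠ Fin.last (r + 1) := by
    simp [Fin.ext_iff]
  -- φ parametrizes the pairs with second component supported at the last index
  set B : Fin (r + 2) := Fin.last (r + 1) with hB
  let φ : ℕ → (Fin (r + 2) →₀ ℕ) × (Fin (r + 2) →₀ ℕ) :=
    fun i => (d - Finsupp.single B i, Finsupp.single B i)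
  have hφinj : Set.InjOn φ (Finset.range (d B + 1)) := by
    intro i _ i' _ he
    have : Finsupp.single B i B = Finsupp.single B i' B := by
      rw [congrArg (fun q => q.2 B) he]
    simpa using this
  have hT : (Finset.range (d B + 1)).image φ ⊆ antidiagonal d := by
    intro q hq
    rw [Finset.mem_image] at hq
    obtain ⟨i, hi, rfl⟩ := hq
    rw [Finset.mem_range] at hi
    rw [Finset.HasAntidiagonal.mem_antidiagonal]
    ext j
    rw [Finsupp.add_apply, Finsupp.tsub_apply]
    by_cases hj : j = B
    · subst hj; simp only [φ, Finsupp.tsub_apply, Finsupp.single_eq_same]; omega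
    · rw [Finsupp.single_apply, if_neg (fun h => hj h.symm)]
      omega
  have hvan : ∀ q ∈ antidiagonal d, q ∉ (Finset.range (d B + 1)).image φ →
      MvPowerSeries.coeff q.1 (Mop (ZEMS zE (r + 1))) *
        MvPowerSeries.coeff q.2 (Done zE (∑ m ∈ Finset.Ici B, MvPowerSeries.X m)) = 0 := by
    intro q hq hqn
    rw [Finset.HasAntidiagonal.mem_antidiagonal] at hq
    rw [coeff_Done, if_neg, mul_zero]
    intro hcond
    apply hqn
    rw [Finset.mem_image]
    have hq2 : q.2 = Finsupp.single B (q.2 B) := by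
      ext j
      by_cases hj : j = B
      · subst hj; simp
      · rw [Finsupp.single_apply, if_neg (fun h => hj h.symm)]
        by_contra h0
        have := hcond j h0
        rw [Finset.mem_Ici] at this
        exact hj (le_antisymm (Fin.le_last _) this)
    have hle : q.2 B ≤ d B := by
      have := congrArg (fun x => x B) hq
      simp only [Finsupp.add_apply] at this
      omega
    refine ⟨q.2 B, Finset.mem_range.mpr (by omega), ?_⟩
    have hq1 : q.1 = d - Finsupp.single B (q.2 B) := by
      rw [← hq2]
      ext j
      have := congrArg (fun x => x j) hq
      simp only [Finsupp.add_apply] at this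
      rw [Finsupp.tsub_apply]
      omega
    show (d - Finsupp.single B (q.2 B), Finsupp.single B (q.2 B)) = q
    rw [← hq1, ← hq2]
  rw [← Finset.sum_subset hT (fun q hq hqn => hvan q hq hqn), Finset.sum_image hφinj]
  -- now the left-hand side
  set w : List ℕ := List.ofFn fun i : Fin r => d i.castSucc.castSucc with hw
  have hlist : (List.ofFn fun j : Fin (r + 2) => d j) = w ++ [d (Fin.last r).castSucc, d B] := by
    rw [List.ofFn_succ', List.ofFn_succ']
    simp [hw, List.concat_eq_append, hB]
  rw [coeff_ZEMS, hlist, hErec w (d (Fin.last r).castSucc) (d B),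
    Finset.Nat.sum_antidiagonal_eq_sum_range_succ_mk, Finset.sum_mul]
  refine Finset.sum_congr rfl fun i hi => ?_
  rw [Finset.mem_range] at hi
  have hiB : i ≤ d B := by omega
  set j : ℕ := d B - i with hj
  set d' : Fin (r + 2) →₀ ℕ := d - Finsupp.single B i with hd'
  -- compute the Done coefficient at single B i
  have c1 : MvPowerSeries.coeff (Finsupp.single B i)
      (Done zE (∑ m ∈ Finset.Ici B, MvPowerSeries.X m))
      = zE [i] * (-1 : ℂ)^i * ((i.factorial : ℂ))⁻¹ := by
    rw [coeff_Done, if_pos]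
    · have hsum : ∑ jj, Finsupp.single B i jj = i := by
        rw [Finset.sum_eq_single B (fun jj _ hjj => by
          rw [Finsupp.single_apply, if_neg (fun h => hjj h.symm)]) (by simp)]
        simp
      have hprod : ∏ jj, (((Finsupp.single B i jj).factorial : ℂ))⁻¹ = ((i.factorial : ℂ))⁻¹ := by
        rw [Finset.prod_eq_single B (fun jj _ hjj => by
          rw [Finsupp.single_apply, if_neg (fun h => hjj h.symm)]; simp) (by simp)]
        simp
      rw [hsum, hprod]
    · intro jj hjj
      rw [Finset.mem_Ici]
      rw [Finsupp.single_apply] at hjj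
      by_cases h : B = jj
      · exact le_of_eq h
      · rw [if_neg h] at hjj; exact absurd rfl hjj
  -- facts about d'
  have hd'A : d' (Fin.last r).castSucc = d (Fin.last r).castSucc := by
    rw [hd', Finsupp.tsub_apply, Finsupp.single_apply, if_neg (fun h => hAB h.symm)]
    omega
  have hd'B : d' B = j := by
    rw [hd', Finsupp.tsub_apply, Finsupp.single_apply, if_pos rfl, hj]
  have hmglast : mg d' (Fin.last r) = d (Fin.last r).castSucc + j := by
    rw [mg_apply, if_pos rfl, hd'A, hd'B]
  have hmgcast : ∀ i' : Fin r, mg d' i'.castSucc = d i'.castSucc.castSucc := by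
    intro i'
    have h1 : (i'.castSucc : Fin (r + 1)) ≠ Fin.last r := by
      have := i'.isLt; simp [Fin.ext_iff]; omega
    have h2 : B ≠ (i'.castSucc.castSucc : Fin (r + 2)) := by
      have := i'.isLt; simp [hB, Fin.ext_iff]; omega
    rw [mg_apply, if_neg h1, add_zero, hd', Finsupp.tsub_apply, Finsupp.single_apply, if_neg h2]
    omega
  have hlist' : (List.ofFn fun i' : Fin (r + 1) => mg d' i') = w ++ [d (Fin.last r).castSucc + j] := by
    rw [List.ofFn_succ']
    simp only [hmgcast, hmglast, hw, List.concat_eq_append]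
  -- the Mop coefficient
  have c2 : MvPowerSeries.coeff d' (Mop (ZEMS zE (r + 1)))
      = ((d (Fin.last r).castSucc + j).choose j : ℂ) *
        (zE (w ++ [d (Fin.last r).castSucc + j]) *
          ∏ i' : Fin (r + 1), ((-1 : ℂ) ^ (mg d' i') * ((mg d' i').factorial : ℂ)⁻¹)) := by
    rw [Mop_apply, hd'A, hd'B, coeff_ZEMS, hlist']
  rw [c1, c2]
  -- sign bookkeeping
  have hsum' : (∑ jj, d' jj) + i = ∑ jj, d jj := by
    have hdd : d' + Finsupp.single B i = d := by
      ext jj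
      rw [Finsupp.add_apply, hd', Finsupp.tsub_apply, Finsupp.single_apply]
      by_cases h : B = jj
      · subst h; rw [if_pos rfl]; omega
      · rw [if_neg h]; omega
    have := congrArg (fun x => ∑ jj, x jj) hdd
    simp only [Finsupp.add_apply, Finset.sum_add_distrib] at this
    have hsingle : ∑ jj, Finsupp.single B i jj = i := by
      rw [Finset.sum_eq_single B (fun jj _ hjj => by
        rw [Finsupp.single_apply, if_neg (fun h => hjj h.symm)]) (by simp)]
      simp
    omega
  have hsign : ((-1 : ℂ)) ^ (∑ i', mg d' i') * (-1 : ℂ) ^ i = (-1 : ℂ) ^ (∑ jj, d jj) := by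
    rw [deg_mg, ← pow_add, hsum']
  -- factorial bookkeeping
  have hPd : ∏ jj, (((d jj).factorial : ℂ))⁻¹ =
      (∏ i' : Fin r, (((d i'.castSucc.castSucc).factorial : ℂ))⁻¹) *
        (((d (Fin.last r).castSucc).factorial : ℂ))⁻¹ * (((d B).factorial : ℂ))⁻¹ := by
    rw [Fin.prod_univ_castSucc (f := fun jj => (((d jj).factorial : ℂ))⁻¹),
      Fin.prod_univ_castSucc (f := fun i' => (((d (Fin.castSucc i')).factorial : ℂ))⁻¹)]
  have hPmg : ∏ i' : Fin (r + 1), (((mg d' i').factorial : ℂ))⁻¹ =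
      (∏ i' : Fin r, (((d i'.castSucc.castSucc).factorial : ℂ))⁻¹) *
        ((((d (Fin.last r).castSucc + j).factorial : ℂ))⁻¹) := by
    rw [Fin.prod_univ_castSucc (f := fun i' => (((mg d' i').factorial : ℂ))⁻¹)]
    simp only [hmgcast, hmglast]
  have Fid : ((d B).choose i : ℂ) * ((((d (Fin.last r).castSucc).factorial : ℂ))⁻¹ * (((d B).factorial : ℂ))⁻¹)
      = ((d (Fin.last r).castSucc + j).choose j : ℂ) *
        ((((d (Fin.last r).castSucc + j).factorial : ℂ))⁻¹ * ((i.factorial : ℂ))⁻¹) := by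
    have e1 := choose_cast (d (Fin.last r).castSucc) j
    have e2 := choose_cast j i
    have hji : j + i = d B := by omega
    rw [← hji]
    linear_combination (((d (Fin.last r).castSucc).factorial : ℂ))⁻¹ * e2
      - ((i.factorial : ℂ))⁻¹ * e1
  -- split products of signs and factorials
  have hsplitd : ∏ jj, ((-1 : ℂ) ^ (d jj) * ((d jj).factorial : ℂ)⁻¹)
      = (-1 : ℂ) ^ (∑ jj, d jj) * ∏ jj, (((d jj).factorial : ℂ))⁻¹ := by
    rw [Finset.prod_mul_distrib, Finset.prod_pow_eq_pow_sum]
  have hsplitmg : ∏ i' : Fin (r + 1), ((-1 : ℂ) ^ (mg d' i') * ((mg d' i').factorial : ℂ)⁻¹)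
      = (-1 : ℂ) ^ (∑ i', mg d' i') * ∏ i', (((mg d' i').factorial : ℂ))⁻¹ := by
    rw [Finset.prod_mul_distrib, Finset.prod_pow_eq_pow_sum]
  rw [hsplitd, hsplitmg, hPd, hPmg]
  linear_combination (zE [i] * zE (w ++ [d (Fin.last r).castSucc + j]) * (-1 : ℂ) ^ (∑ jj, d jj)
      * (∏ i' : Fin r, (((d i'.castSucc.castSucc).factorial : ℂ))⁻¹)) * Fid
    - (zE [i] * zE (w ++ [d (Fin.last r).castSucc + j]) *
        ((d (Fin.last r).castSucc + j).choose j : ℂ) *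
        (∏ i' : Fin r, (((d i'.castSucc.castSucc).factorial : ℂ))⁻¹) *
        (((d (Fin.last r).castSucc + j).factorial : ℂ))⁻¹ * ((i.factorial : ℂ))⁻¹) * hsign

lemma ZEMS_one (zE : List ℕ → ℂ) :
    ZEMS zE 1 = ∏ n : Fin 1, Done zE (∑ m ∈ Finset.Ici n, (MvPowerSeries.X m : MvPowerSeries (Fin 1) ℂ)) := by
  rw [Fin.prod_univ_one]
  ext d
  rw [coeff_ZEMS, coeff_Done]
  rw [if_pos (fun i _ => Finset.mem_Ici.mpr (Fin.zero_le i))]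
  rw [Fin.sum_univ_one, Fin.prod_univ_one, Fin.prod_univ_one]
  have : (List.ofFn fun i : Fin 1 => d i) = [d 0] := by simp [List.ofFn_succ]
  rw [this]
  ring

end Aux

/-- The generating function `Z_EMS` factors as the product of the depth-one generating function
evaluated at `uₙ = tₙ + t_{n+1} + ⋯ + t_r` for `n = 1, …, r`:
`Z_EMS(t₁,…,t_r) = Z_EMS(t_r)·Z_EMS(t_{r-1}+t_r)⋯Z_EMS(t₁+⋯+t_r)`. -/
theorem ZEMS_eq_prod_depth_one (zE : List ℕ → ℂ)
    (hE1 : ∀ k : ℕ, zE [k] = riemannZeta (-(k : ℂ)))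
    (hErec : ∀ (w : List ℕ) (a b : ℕ),
      zE (w ++ [a, b]) =
        ∑ p ∈ Finset.HasAntidiagonal.antidiagonal b, (b.choose p.1 : ℂ) * zE [p.1] * zE (w ++ [a + p.2]))
    (r : ℕ) (hr : 1 ≤ r) :
    ZEMS zE r =
      ∏ n : Fin r,
        Done zE (∑ m ∈ Finset.Ici n, (MvPowerSeries.X m : MvPowerSeries (Fin r) ℂ)) := by
  obtain ⟨n, rfl⟩ : ∃ n, r = n + 1 := ⟨r - 1, by omega⟩
  clear hr
  induction n with
  | zero => exact ZEMS_one zE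
  | succ m ih =>
    rw [ZEMS_step zE hErec m, ih,
      Fin.prod_univ_castSucc (f := fun n : Fin (m + 2) =>
        Done zE (∑ mm ∈ Finset.Ici n, (MvPowerSeries.X mm : MvPowerSeries (Fin (m + 2)) ℂ))),
      Mop_prod]
    congr 1
    exact Finset.prod_congr rfl fun n _ => Mop_Done zE n
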